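/- Let −1 < ν < μ and let f be twice continuously differentiable on [0,∞) with lim_{y→0+} y^ν·f'(y) = 0. Define the first descent operator (T f)(x) = (2Γ((μ+1)/2)/(Γ((μ−ν)/2)·Γ((ν+1)/2)))·x^{1−μ}·∫₀^x f(y)·(x²−y²)^{(μ−ν)/2−1}·y^ν dy for x > 0. Then T intertwines the Bessel operators: (T(B_ν f))(x) = (B_μ(T f))(x) for all x > 0, and T applied to the constant function 1 equals 1, i.e. (2Γ((μ+1)/2)/(Γ((μ−ν)/2)·Γ((ν+1)/2)))·x^{1−μ}·∫₀^x (x²−y²)^{(μ−ν)/2−1}·y^ν dy = 1 for every x > 0. -/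

import Mathlib

open MeasureTheory Real Filter
open scoped Interval

/-- The Bessel operator `B_ν u (y) = u''(y) + (ν/y) u'(y)`. -/
noncomputable def besselOp (ν : ℝ) (u : ℝ → ℝ) (y : ℝ) : ℝ :=
  deriv (deriv u) y + (ν / y) * deriv u y

/-- The first "descent" operator
`T f (x) = (2Γ((μ+1)/2)/(Γ((μ-ν)/2)Γ((ν+1)/2))) x^{1-μ} ∫₀^x f(y)(x²-y²)^{(μ-ν)/2-1} y^ν dy`. -/
noncomputable def descentOp1 (ν μ : ℝ) (f : ℝ → ℝ) (x : ℝ) : ℝ :=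
  2 * Real.Gamma ((μ + 1) / 2) / (Real.Gamma ((μ - ν) / 2) * Real.Gamma ((ν + 1) / 2)) *
    x ^ (1 - μ) * ∫ y in (0 : ℝ)..x, f y * (x ^ 2 - y ^ 2) ^ ((μ - ν) / 2 - 1) * y ^ ν

section AuxLemmas

open Set intervalIntegral

lemma meas_w (p σ : ℝ) : Measurable (fun t : ℝ => (1 - t^2)^p * t^σ) := by fun_prop

lemma w_nonneg (p σ : ℝ) {t : ℝ} (ht : t ∈ Set.Icc (0:ℝ) 1) : 0 ≤ (1 - t^2)^p * t^σ :=
  mul_nonneg (Real.rpow_nonneg (by nlinarith [ht.1, ht.2]) _) (Real.rpow_nonneg ht.1 _)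

lemma wInt {p σ : ℝ} (hp : -1 < p) (hσ : -1 < σ) :
    IntervalIntegrable (fun t : ℝ => (1 - t^2)^p * t^σ) volume 0 1 := by
  have hIoc0 : Ι (0:ℝ) (1/2) = Set.Ioc 0 (1/2) := Set.uIoc_of_le (by norm_num)
  have hIoc1 : Ι (1/2:ℝ) 1 = Set.Ioc (1/2) 1 := Set.uIoc_of_le (by norm_num)
  have hASM0 : AEStronglyMeasurable (fun t : ℝ => (1 - t^2)^p * t^σ)
      (volume.restrict (Ι (0:ℝ) (1/2))) := (meas_w p σ).aestronglyMeasurable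
  have hASM1 : AEStronglyMeasurable (fun t : ℝ => (1 - t^2)^p * t^σ)
      (volume.restrict (Ι (1/2:ℝ) 1)) := (meas_w p σ).aestronglyMeasurable
  have hc0 : ContinuousOn (fun t : ℝ => (1 - t^2)^p) (Set.Icc 0 (1/2)) := by
    intro t ht
    exact (((continuous_const.sub (continuous_pow 2)).continuousAt).rpow_const
      (Or.inl (by rcases ht with ⟨h1, h2⟩; show (1:ℝ) - t^2 ≠ 0; nlinarith))).continuousWithinAt
  obtain ⟨C0, hC0⟩ := isCompact_Icc.exists_bound_of_continuousOn hc0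
  have part0 : IntervalIntegrable (fun t : ℝ => (1 - t^2)^p * t^σ) volume 0 (1/2) := by
    refine ((intervalIntegral.intervalIntegrable_rpow' hσ (a := 0) (b := 1/2)).const_mul
      C0).mono_fun hASM0 ?_
    refine (ae_restrict_iff' measurableSet_uIoc).2 (ae_of_all _ fun t ht => ?_)
    rw [hIoc0] at ht
    have ht0 : (0:ℝ) ≤ t := ht.1.le
    show ‖(1 - t^2)^p * t^σ‖ ≤ ‖C0 * t^σ‖
    rw [Real.norm_eq_abs, abs_of_nonneg (w_nonneg p σ ⟨ht0, by linarith [ht.2]⟩), Real.norm_eq_abs]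
    calc (1 - t^2)^p * t^σ ≤ C0 * t^σ := by
            have := hC0 t ⟨ht0, ht.2⟩
            rw [Real.norm_eq_abs] at this
            exact mul_le_mul_of_nonneg_right ((le_abs_self _).trans this) (Real.rpow_nonneg ht0 _)
      _ ≤ |C0 * t^σ| := le_abs_self _
  have hc1 : ContinuousOn (fun t : ℝ => (1 + t)^p * t^σ) (Set.Icc (1/2 : ℝ) 1) := by
    intro t ht
    have h1 : ContinuousAt (fun t : ℝ => (1 + t)^p) t :=
      ((continuous_const.add continuous_id).continuousAt).rpow_const
        (Or.inl (by rcases ht with ⟨h1,h2⟩; show (1:ℝ) + t ≠ 0; nlinarith))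
    have h2 : ContinuousAt (fun t : ℝ => t^σ) t :=
      Real.continuousAt_rpow_const t σ (Or.inl (by rcases ht with ⟨h1,h2⟩; nlinarith))
    exact (h1.mul h2).continuousWithinAt
  obtain ⟨C1, hC1⟩ := isCompact_Icc.exists_bound_of_continuousOn hc1
  have base1 : IntervalIntegrable (fun t : ℝ => C1 * (1 - t)^p) volume (1/2) 1 := by
    have := ((intervalIntegral.intervalIntegrable_rpow' hp (a := 0) (b := 1/2)).comp_sub_left 1).symm
    norm_num at this
    exact this.const_mul C1
  have part1 : IntervalIntegrable (fun t : ℝ => (1 - t^2)^p * t^σ) volume (1/2) 1 := by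
    refine base1.mono_fun hASM1 ?_
    refine (ae_restrict_iff' measurableSet_uIoc).2 (ae_of_all _ fun t ht => ?_)
    rw [hIoc1] at ht
    have ht0 : (0:ℝ) ≤ t := by linarith [ht.1]
    have key : (1 - t^2)^p * t^σ = (1 - t)^p * ((1 + t)^p * t^σ) := by
      have h12 : (1 - t^2 : ℝ) = (1 - t) * (1 + t) := by ring
      rw [h12, Real.mul_rpow (by linarith [ht.2]) (by linarith)]
      ring
    show ‖(1 - t^2)^p * t^σ‖ ≤ ‖C1 * (1 - t)^p‖
    rw [Real.norm_eq_abs, abs_of_nonneg (w_nonneg p σ ⟨ht0, ht.2⟩), key, Real.norm_eq_abs]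
    calc (1 - t)^p * ((1 + t)^p * t^σ) ≤ (1 - t)^p * C1 := by
          refine mul_le_mul_of_nonneg_left ?_ (Real.rpow_nonneg (by linarith [ht.2]) _)
          exact (le_abs_self _).trans (le_of_eq_of_le (Real.norm_eq_abs _).symm (hC1 t ⟨ht.1.le, ht.2⟩))
      _ = C1 * (1 - t)^p := mul_comm _ _
      _ ≤ |C1 * (1 - t)^p| := le_abs_self _
  exact part0.trans part1

lemma domInt {p σ : ℝ} (hp : -1 < p) (hσ : -1 < σ) {φ : ℝ → ℝ} {M : ℝ}
    (hm : AEStronglyMeasurable φ (volume.restrict (Ι (0:ℝ) 1)))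
    (hb : ∀ t ∈ Set.Ioc (0:ℝ) 1, |φ t| ≤ M) :
    IntervalIntegrable (fun t : ℝ => φ t * ((1 - t^2)^p * t^σ)) volume 0 1 := by
  have hIoc : Ι (0:ℝ) 1 = Set.Ioc 0 1 := Set.uIoc_of_le (by norm_num)
  refine ((wInt hp hσ).const_mul M).mono_fun (hm.mul (meas_w p σ).aestronglyMeasurable) ?_
  refine (ae_restrict_iff' measurableSet_uIoc).2 (ae_of_all _ fun t ht => ?_)
  rw [hIoc] at ht
  have hw := w_nonneg p σ ⟨ht.1.le, ht.2⟩
  show ‖φ t * ((1 - t^2)^p * t^σ)‖ ≤ ‖M * ((1 - t^2)^p * t^σ)‖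
  rw [Real.norm_eq_abs, Real.norm_eq_abs, abs_mul]
  calc |φ t| * |(1 - t^2)^p * t^σ| = |φ t| * ((1 - t^2)^p * t^σ) := by rw [abs_of_nonneg hw]
    _ ≤ M * ((1 - t^2)^p * t^σ) := mul_le_mul_of_nonneg_right (hb t ht) hw
    _ ≤ |M * ((1 - t^2)^p * t^σ)| := le_abs_self _

lemma realBeta {a b : ℝ} (ha : 0 < a) (hb : 0 < b) :
    ∫ x in (0:ℝ)..1, x^(a-1) * (1-x)^(b-1) = Gamma a * Gamma b / Gamma (a+b) := by
  have hG : (0:ℝ) < Gamma (a+b) := Real.Gamma_pos_of_pos (by linarith)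
  have key := Complex.Gamma_mul_Gamma_eq_betaIntegral (s := (a:ℂ)) (t := (b:ℂ))
    (by simpa using ha) (by simpa using hb)
  have hbeta : Complex.betaIntegral a b = ((∫ x in (0:ℝ)..1, x^(a-1) * (1-x)^(b-1) : ℝ) : ℂ) := by
    rw [Complex.betaIntegral]
    rw [← intervalIntegral.integral_ofReal]
    refine intervalIntegral.integral_congr fun x hx => ?_
    rw [Set.uIcc_of_le (by norm_num)] at hx
    rw [Complex.ofReal_mul, Complex.ofReal_cpow hx.1, Complex.ofReal_cpow (by linarith [hx.2])]
    push_cast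
    ring
  rw [hbeta, ← Complex.ofReal_add, Complex.Gamma_ofReal, Complex.Gamma_ofReal,
    Complex.Gamma_ofReal] at key
  have h2 : (Gamma a * Gamma b : ℝ) = Gamma (a+b) * ∫ x in (0:ℝ)..1, x^(a-1) * (1-x)^(b-1) := by
    exact_mod_cast key
  field_simp
  linarith [h2]

lemma betaSub {ν α : ℝ} (hν : -1 < ν) (hα : 0 < α) :
    ∫ t in (0:ℝ)..1, (1 - t^2)^(α-1) * t^ν
      = Gamma ((ν+1)/2) * Gamma α / (2 * Gamma ((ν+1)/2 + α)) := by
  set g : ℝ → ℝ := fun s => Set.indicator (Set.Ioo 0 1) (fun s => s^((ν+1)/2-1) * (1-s)^(α-1)) s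
    with hg
  have hsub := integral_comp_rpow_Ioi g (p := 2) (by norm_num)
  have hR : ∫ s in Set.Ioi (0:ℝ), g s = ∫ s in (0:ℝ)..1, s^((ν+1)/2-1) * (1-s)^(α-1) := by
    rw [hg, MeasureTheory.integral_indicator measurableSet_Ioo,
      Measure.restrict_restrict measurableSet_Ioo,
      Set.inter_eq_self_of_subset_left Set.Ioo_subset_Ioi_self,
      intervalIntegral.integral_of_le (by norm_num : (0:ℝ) ≤ 1),
      MeasureTheory.integral_Ioc_eq_integral_Ioo]
  have hL : ∫ x in Set.Ioi (0:ℝ), (|(2:ℝ)| * x^((2:ℝ)-1)) • g (x^(2:ℝ))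
      = 2 * ∫ t in (0:ℝ)..1, (1 - t^2)^(α-1) * t^ν := by
    have hset : ∀ x ∈ Set.Ioi (0:ℝ), (|(2:ℝ)| * x^((2:ℝ)-1)) • g (x^(2:ℝ))
        = Set.indicator (Set.Ioo (0:ℝ) 1) (fun t => 2 * ((1 - t^2)^(α-1) * t^ν)) x := by
      intro x hx
      have hx0 : (0:ℝ) < x := hx
      have hx2 : x ^ (2:ℝ) = x^2 := by rw [← Real.rpow_natCast x 2]; norm_num
      by_cases hmem : x ∈ Set.Ioo (0:ℝ) 1
      · have hx2mem : x^(2:ℝ) ∈ Set.Ioo (0:ℝ) 1 := by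
          rw [hx2]; exact ⟨by positivity, by nlinarith [hmem.1, hmem.2]⟩
        rw [Set.indicator_of_mem hmem, hg]
        simp only [Set.indicator_of_mem hx2mem]
        rw [hx2]
        have h1 : ((x^2 : ℝ))^((ν+1)/2-1) = x^(ν-1) := by
          rw [← Real.rpow_natCast x 2, ← Real.rpow_mul hx0.le]
          norm_num
          ring_nf
        have h2 : x^((2:ℝ)-1) = x := by norm_num
        have h3 : x^(ν-1) * x = x^ν := by
          rw [← Real.rpow_add_one hx0.ne' (ν-1)]; norm_num
        rw [h1, h2, smul_eq_mul, abs_of_pos (by norm_num : (0:ℝ) < 2)]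
        linear_combination 2 * (1-x^2)^(α-1) * h3
      · have hx2mem : x^(2:ℝ) ∉ Set.Ioo (0:ℝ) 1 := by
          rw [hx2]
          intro hc
          exact hmem ⟨hx0, by nlinarith [hc.2]⟩
        rw [Set.indicator_of_notMem hmem, hg]
        simp only [Set.indicator_of_notMem hx2mem]
        simp
    rw [MeasureTheory.setIntegral_congr_fun measurableSet_Ioi hset,
      MeasureTheory.integral_indicator measurableSet_Ioo,
      Measure.restrict_restrict measurableSet_Ioo,
      Set.inter_eq_self_of_subset_left Set.Ioo_subset_Ioi_self,
      ← MeasureTheory.integral_Ioc_eq_integral_Ioo,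
      ← intervalIntegral.integral_of_le (by norm_num : (0:ℝ) ≤ 1),
      intervalIntegral.integral_const_mul]
  rw [hL, hR] at hsub
  rw [realBeta (by linarith : (0:ℝ) < (ν+1)/2) hα] at hsub
  have hZ : Gamma ((ν+1)/2) * Gamma α / (2 * Gamma ((ν+1)/2 + α))
      = (Gamma ((ν+1)/2) * Gamma α / Gamma ((ν+1)/2 + α)) / 2 := by ring
  rw [hZ]
  linarith [hsub]

lemma descent_cov (ν μ : ℝ) (f : ℝ → ℝ) {x : ℝ} (hx : 0 < x) :
    descentOp1 ν μ f x = 2 * Real.Gamma ((μ + 1) / 2) /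
      (Real.Gamma ((μ - ν) / 2) * Real.Gamma ((ν + 1) / 2)) *
      ∫ t in (0:ℝ)..1, f (t*x) * ((1 - t^2)^((μ-ν)/2-1) * t^ν) := by
  set α : ℝ := (μ - ν)/2 with hαdef
  rw [descentOp1]
  have hcomp : (∫ t in (0:ℝ)..1, f (t*x) * (x^2-(t*x)^2)^(α-1) * (t*x)^ν)
      = x⁻¹ * ∫ y in (0:ℝ)..x, f y * (x^2-y^2)^(α-1) * y^ν := by
    simpa using intervalIntegral.integral_comp_mul_right
      (fun y => f y * (x ^ 2 - y ^ 2) ^ (α - 1) * y ^ ν) (a := 0) (b := 1) hx.ne'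
  have hmain : (∫ y in (0:ℝ)..x, f y * (x ^ 2 - y ^ 2) ^ (α - 1) * y ^ ν)
      = x * ∫ t in (0:ℝ)..1, f (t*x) * (x ^ 2 - (t*x) ^ 2) ^ (α - 1) * (t*x) ^ ν := by
    rw [hcomp, ← mul_assoc, mul_inv_cancel₀ hx.ne', one_mul]
  rw [hmain]
  have hcongr : (∫ t in (0:ℝ)..1, f (t*x) * (x ^ 2 - (t*x) ^ 2) ^ (α - 1) * (t*x) ^ ν)
      = ((x^2)^(α-1) * x^ν) * ∫ t in (0:ℝ)..1, f (t*x) * ((1 - t^2)^(α-1) * t^ν) := by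
    rw [← intervalIntegral.integral_const_mul]
    refine intervalIntegral.integral_congr fun t ht => ?_
    rw [Set.uIcc_of_le (by norm_num : (0:ℝ) ≤ 1)] at ht
    have h1 : (x^2 - (t*x)^2 : ℝ) = x^2 * (1 - t^2) := by ring
    rw [h1, Real.mul_rpow (sq_nonneg x) (by nlinarith [ht.1, ht.2]),
      Real.mul_rpow ht.1 hx.le]
    ring
  rw [hcongr]
  have e1 : ((x^2:ℝ))^(α-1) = x^(2*(α-1)) := by
    rw [← Real.rpow_natCast x 2, ← Real.rpow_mul hx.le]; norm_num
  have hpow : x ^ (1-μ) * (x * ((x^2)^(α-1) * x^ν)) = 1 := by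
    calc x^(1-μ) * (x * ((x^2)^(α-1) * x^ν))
        = x^(1-μ) * (x^(1:ℝ) * (x^(2*(α-1)) * x^ν)) := by rw [e1, Real.rpow_one]
      _ = x^((1-μ) + (1 + (2*(α-1) + ν))) := by
          rw [Real.rpow_add hx, Real.rpow_add hx, Real.rpow_add hx]
      _ = x^(0:ℝ) := by rw [hαdef]; ring_nf
      _ = 1 := Real.rpow_zero x
  linear_combination (2 * Real.Gamma ((μ + 1) / 2) /
      (Real.Gamma ((μ - ν) / 2) * Real.Gamma ((ν + 1) / 2)) *
      ∫ t in (0:ℝ)..1, f (t*x) * ((1 - t^2)^(α-1) * t^ν)) * hpow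

lemma contOn_comp_mul {φ : ℝ → ℝ} (hφc : ContinuousOn φ (Set.Ici 0)) {x : ℝ} (hx : 0 < x) :
    ContinuousOn (fun t : ℝ => φ (t*x)) (Set.Ioc 0 1) := by
  intro t ht
  have htx : 0 < t * x := mul_pos ht.1 hx
  have h1 : ContinuousAt φ (t*x) := (hφc (t*x) htx.le).continuousAt (Ici_mem_nhds htx)
  have h2 : ContinuousAt (fun t : ℝ => t * x) t := (continuous_mul_right x).continuousAt
  exact (ContinuousAt.comp (x := t) h1 h2).continuousWithinAt

lemma asm_comp_mul {φ : ℝ → ℝ} (hφc : ContinuousOn φ (Set.Ici 0)) {x : ℝ} (hx : 0 < x) (k : ℕ) :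
    AEStronglyMeasurable (fun t : ℝ => t^k * φ (t*x)) (volume.restrict (Ι (0:ℝ) 1)) := by
  rw [Set.uIoc_of_le (by norm_num : (0:ℝ) ≤ 1)]
  exact ((continuous_pow k).continuousOn.mul (contOn_comp_mul hφc hx)).aestronglyMeasurable
    measurableSet_Ioc

lemma derivUnderInt {α ν : ℝ} (hα1 : -1 < α - 1) (hν : -1 < ν) {φ ψ : ℝ → ℝ}
    (hφc : ContinuousOn φ (Set.Ici 0)) (hψc : ContinuousOn ψ (Set.Ici 0))
    (hd : ∀ y : ℝ, 0 < y → HasDerivAt φ (ψ y) y) {x : ℝ} (hx : 0 < x) (k : ℕ) :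
    HasDerivAt (fun x => ∫ t in (0:ℝ)..1, t^k * φ (t*x) * ((1-t^2)^(α-1) * t^ν))
      (∫ t in (0:ℝ)..1, t^(k+1) * ψ (t*x) * ((1-t^2)^(α-1) * t^ν)) x := by
  obtain ⟨M, hM⟩ := isCompact_Icc.exists_bound_of_continuousOn
    (hψc.mono (Set.Icc_subset_Ici_self : Set.Icc 0 (2*x) ⊆ Set.Ici 0))
  obtain ⟨Mf, hMf⟩ := isCompact_Icc.exists_bound_of_continuousOn
    (hφc.mono (Set.Icc_subset_Ici_self : Set.Icc 0 (2*x) ⊆ Set.Ici 0))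
  have hball : ∀ xx ∈ Metric.ball x (x/2), x/2 < xx ∧ xx < 2*x := by
    intro xx hxx
    rw [Metric.mem_ball, Real.dist_eq, abs_lt] at hxx
    constructor <;> linarith [hxx.1, hxx.2]
  have key := intervalIntegral.hasDerivAt_integral_of_dominated_loc_of_deriv_le
    (F := fun xx t => t^k * φ (t*xx) * ((1-t^2)^(α-1) * t^ν))
    (F' := fun xx t => t^(k+1) * ψ (t*xx) * ((1-t^2)^(α-1) * t^ν))
    (x₀ := x) (a := 0) (b := 1) (μ := volume)
    (bound := fun t => |M| * ((1-t^2)^(α-1) * t^ν))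
    (s := Metric.ball x (x/2)) (Metric.ball_mem_nhds x (by positivity))
    ?_ ?_ ?_ ?_ ?_ ?_
  · exact key.2
  · filter_upwards [Metric.ball_mem_nhds x (by positivity : (0:ℝ) < x/2)] with xx hxx
    have hxx0 : 0 < xx := by linarith [(hball xx hxx).1, hx]
    exact (asm_comp_mul hφc hxx0 k).mul (meas_w _ _).aestronglyMeasurable
  · have h := domInt hα1 hν (M := Mf) (φ := fun t => t^k * φ (t*x))
      (asm_comp_mul hφc hx k) ?_
    · exact h
    · intro t ht
      have htx : t*x ∈ Set.Icc (0:ℝ) (2*x) := by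
        constructor
        · exact mul_nonneg ht.1.le hx.le
        · nlinarith [ht.1, ht.2, hx]
      have h1 := hMf (t*x) htx
      rw [Real.norm_eq_abs] at h1
      calc |t^k * φ (t*x)| = t^k * |φ (t*x)| := by
            rw [abs_mul, abs_of_nonneg (pow_nonneg ht.1.le k)]
        _ ≤ 1 * |φ (t*x)| := by
            refine mul_le_mul_of_nonneg_right ?_ (abs_nonneg _)
            exact pow_le_one₀ ht.1.le ht.2
        _ = |φ (t*x)| := one_mul _
        _ ≤ Mf := h1
  · exact ((asm_comp_mul hψc hx (k+1)).mul (meas_w _ _).aestronglyMeasurable)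
  · refine ae_of_all _ fun t ht xx hxx => ?_
    rw [Set.uIoc_of_le (by norm_num : (0:ℝ) ≤ 1)] at ht
    obtain ⟨h1, h2⟩ := hball xx hxx
    have hxx0 : 0 < xx := by linarith
    have htx : t*xx ∈ Set.Icc (0:ℝ) (2*x) := by
      constructor
      · exact mul_nonneg ht.1.le (by linarith)
      · nlinarith [ht.1, ht.2]
    have hw := w_nonneg (α-1) ν ⟨ht.1.le, ht.2⟩
    have hMt := hM (t*xx) htx
    rw [Real.norm_eq_abs] at hMt ⊢
    rw [abs_mul, abs_mul, abs_of_nonneg (pow_nonneg ht.1.le (k+1)), abs_of_nonneg hw]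
    calc t^(k+1) * |ψ (t*xx)| * ((1-t^2)^(α-1) * t^ν)
        ≤ 1 * |M| * ((1-t^2)^(α-1) * t^ν) := by
          refine mul_le_mul_of_nonneg_right ?_ hw
          exact mul_le_mul (pow_le_one₀ ht.1.le ht.2) (hMt.trans (le_abs_self M))
            (abs_nonneg _) zero_le_one
      _ = |M| * ((1-t^2)^(α-1) * t^ν) := by ring
  · exact (wInt hα1 hν).const_mul _
  · refine ae_of_all _ fun t ht xx hxx => ?_
    rw [Set.uIoc_of_le (by norm_num : (0:ℝ) ≤ 1)] at ht
    obtain ⟨h1, h2⟩ := hball xx hxx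
    have htx : 0 < t * xx := mul_pos ht.1 (by linarith)
    have hmul : HasDerivAt (fun xx : ℝ => t * xx) t xx := by
      simpa using (hasDerivAt_id xx).const_mul t
    have hdd : HasDerivAt (fun xx : ℝ => φ (t*xx)) (ψ (t*xx) * t) xx := by
      exact (hd (t*xx) htx).comp xx hmul
    have := (hdd.const_mul (t^k)).mul_const ((1-t^2)^(α-1) * t^ν)
    exact this.congr_deriv (by ring)

end AuxLemmas

/-- the first descent operator intertwines the Bessel operators,
`T B_ν = B_μ T`, and `T 1 = 1`. -/
theorem descent1_transmutation (ν μ : ℝ) (hν : -1 < ν) (hνμ : ν < μ) (f : ℝ → ℝ)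
    (hf : ContDiffOn ℝ 2 f (Set.Ici (0 : ℝ)))
    (hf'0 : Tendsto (fun y => y ^ ν * deriv f y) (nhdsWithin 0 (Set.Ioi (0 : ℝ))) (nhds 0)) :
    ∀ x : ℝ, 0 < x →
      descentOp1 ν μ (besselOp ν f) x = besselOp μ (descentOp1 ν μ f) x ∧
      descentOp1 ν μ (fun _ => 1) x = 1 := by
  intro x hx
  have hα : (0:ℝ) < (μ-ν)/2 := by linarith
  have hα1 : (-1:ℝ) < (μ-ν)/2 - 1 := by linarith
  set F1 : ℝ → ℝ := derivWithin f (Set.Ici (0:ℝ)) with hF1def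
  set F2 : ℝ → ℝ := derivWithin F1 (Set.Ici (0:ℝ)) with hF2def
  have hfc : ContinuousOn f (Set.Ici 0) := hf.continuousOn
  have hF1cd : ContDiffOn ℝ 1 F1 (Set.Ici 0) :=
    hf.derivWithin (m := 1) (uniqueDiffOn_Ici 0) (by norm_num)
  have hF1c : ContinuousOn F1 (Set.Ici 0) := hF1cd.continuousOn
  have hF2c : ContinuousOn F2 (Set.Ici 0) :=
    (hF1cd.derivWithin (m := 0) (uniqueDiffOn_Ici 0) (by norm_num)).continuousOn
  have hdf : ∀ y : ℝ, 0 < y → deriv f y = F1 y := fun y hy =>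
    (derivWithin_of_mem_nhds (Ici_mem_nhds hy)).symm
  have hder1 : ∀ y : ℝ, 0 < y → HasDerivAt f (F1 y) y := by
    intro y hy
    have hd := (hf.differentiableOn (by norm_num)).differentiableAt (Ici_mem_nhds hy)
    rw [← hdf y hy]
    exact hd.hasDerivAt
  have hder2 : ∀ y : ℝ, 0 < y → HasDerivAt F1 (F2 y) y := by
    intro y hy
    have hd := (hF1cd.differentiableOn (by norm_num)).differentiableAt (Ici_mem_nhds hy)
    have h2 : F2 y = deriv F1 y := derivWithin_of_mem_nhds (Ici_mem_nhds hy)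
    rw [h2]
    exact hd.hasDerivAt
  have hddf : ∀ y : ℝ, 0 < y → deriv (deriv f) y = F2 y := by
    intro y hy
    have hev : deriv f =ᶠ[nhds y] F1 := by
      filter_upwards [isOpen_Ioi.mem_nhds hy] with z hz using hdf z hz
    rw [hev.deriv_eq]
    exact (hder2 y hy).deriv
  have hbessel : ∀ y : ℝ, 0 < y → besselOp ν f y = F2 y + (ν / y) * F1 y := by
    intro y hy
    rw [besselOp, hddf y hy, hdf y hy]
  -- Gamma positivity
  have hG1 : (0:ℝ) < Real.Gamma ((μ+1)/2) := Real.Gamma_pos_of_pos (by linarith)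
  have hG2 : (0:ℝ) < Real.Gamma ((μ-ν)/2) := Real.Gamma_pos_of_pos hα
  have hG3 : (0:ℝ) < Real.Gamma ((ν+1)/2) := Real.Gamma_pos_of_pos (by linarith)
  constructor
  · -- transmutation
    set C : ℝ := 2 * Real.Gamma ((μ + 1) / 2) /
      (Real.Gamma ((μ - ν) / 2) * Real.Gamma ((ν + 1) / 2)) with hCdef
    -- derivative structure of the transformed function
    have hg0d : ∀ z : ℝ, 0 < z → HasDerivAt
        (fun xx => ∫ t in (0:ℝ)..1, t^(0:ℕ) * f (t*xx) * ((1-t^2)^((μ-ν)/2-1) * t^ν))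
        (∫ t in (0:ℝ)..1, t^(1:ℕ) * F1 (t*z) * ((1-t^2)^((μ-ν)/2-1) * t^ν)) z :=
      fun z hz => derivUnderInt hα1 hν hfc hF1c hder1 hz 0
    have hg1d : ∀ z : ℝ, 0 < z → HasDerivAt
        (fun xx => ∫ t in (0:ℝ)..1, t^(1:ℕ) * F1 (t*xx) * ((1-t^2)^((μ-ν)/2-1) * t^ν))
        (∫ t in (0:ℝ)..1, t^(2:ℕ) * F2 (t*z) * ((1-t^2)^((μ-ν)/2-1) * t^ν)) z :=
      fun z hz => derivUnderInt hα1 hν hF1c hF2c hder2 hz 1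
    have hTeq : ∀ z : ℝ, 0 < z → descentOp1 ν μ f z
        = C * ∫ t in (0:ℝ)..1, t^(0:ℕ) * f (t*z) * ((1-t^2)^((μ-ν)/2-1) * t^ν) := by
      intro z hz
      rw [descent_cov ν μ f hz, ← hCdef]
      congr 1
      exact intervalIntegral.integral_congr fun t _ => by ring
    have hT'd : ∀ z : ℝ, 0 < z → HasDerivAt (descentOp1 ν μ f)
        (C * ∫ t in (0:ℝ)..1, t^(1:ℕ) * F1 (t*z) * ((1-t^2)^((μ-ν)/2-1) * t^ν)) z := by
      intro z hz
      have h1 := (hg0d z hz).const_mul C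
      refine HasDerivAt.congr_of_eventuallyEq h1 ?_
      filter_upwards [isOpen_Ioi.mem_nhds hz] with u hu using hTeq u hu
    have hT'x : deriv (descentOp1 ν μ f) x
        = C * ∫ t in (0:ℝ)..1, t^(1:ℕ) * F1 (t*x) * ((1-t^2)^((μ-ν)/2-1) * t^ν) :=
      (hT'd x hx).deriv
    have hT''x : deriv (deriv (descentOp1 ν μ f)) x
        = C * ∫ t in (0:ℝ)..1, t^(2:ℕ) * F2 (t*x) * ((1-t^2)^((μ-ν)/2-1) * t^ν) := by
      have hev : deriv (descentOp1 ν μ f) =ᶠ[nhds x]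
          fun z => C * ∫ t in (0:ℝ)..1, t^(1:ℕ) * F1 (t*z) * ((1-t^2)^((μ-ν)/2-1) * t^ν) := by
        filter_upwards [isOpen_Ioi.mem_nhds hx] with z hz using (hT'd z hz).deriv
      rw [hev.deriv_eq]
      exact ((hg1d x hx).const_mul C).deriv
    -- bounds
    obtain ⟨M1, hM1⟩ := isCompact_Icc.exists_bound_of_continuousOn
      (hF1c.mono (Set.Icc_subset_Ici_self : Set.Icc 0 x ⊆ Set.Ici 0))
    obtain ⟨M2, hM2⟩ := isCompact_Icc.exists_bound_of_continuousOn
      (hF2c.mono (Set.Icc_subset_Ici_self : Set.Icc 0 x ⊆ Set.Ici 0))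
    have htxmem : ∀ t ∈ Set.Ioc (0:ℝ) 1, 0 < t*x ∧ t*x ≤ x := fun t ht =>
      ⟨mul_pos ht.1 hx, by nlinarith [ht.2, ht.1, hx]⟩
    have hasmF2 : AEStronglyMeasurable (fun t : ℝ => F2 (t*x)) (volume.restrict (Ι (0:ℝ) 1)) := by
      rw [Set.uIoc_of_le (by norm_num : (0:ℝ) ≤ 1)]
      exact (contOn_comp_mul hF2c hx).aestronglyMeasurable measurableSet_Ioc
    -- integrability of the four integrands
    have i2 : IntervalIntegrable
        (fun t : ℝ => F2 (t*x) * ((1-t^2)^((μ-ν)/2-1) * t^ν)) volume 0 1 := by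
      refine domInt hα1 hν hasmF2 (M := |M2|) fun t ht => ?_
      have h1 := hM2 (t*x) ⟨(htxmem t ht).1.le, (htxmem t ht).2⟩
      rw [Real.norm_eq_abs] at h1
      exact h1.trans (le_abs_self M2)
    have i2' : IntervalIntegrable
        (fun t : ℝ => t^(2:ℕ) * F2 (t*x) * ((1-t^2)^((μ-ν)/2-1) * t^ν)) volume 0 1 := by
      refine domInt hα1 hν (asm_comp_mul hF2c hx 2) (M := |M2|) fun t ht => ?_
      have h1 := hM2 (t*x) ⟨(htxmem t ht).1.le, (htxmem t ht).2⟩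
      rw [Real.norm_eq_abs] at h1
      calc |t^(2:ℕ) * F2 (t*x)| = t^(2:ℕ) * |F2 (t*x)| := by
            rw [abs_mul, abs_of_nonneg (pow_nonneg ht.1.le 2)]
        _ ≤ 1 * |F2 (t*x)| := by
            refine mul_le_mul_of_nonneg_right ?_ (abs_nonneg _)
            exact pow_le_one₀ ht.1.le ht.2
        _ ≤ |M2| := by rw [one_mul]; exact h1.trans (le_abs_self M2)
    have i1' : IntervalIntegrable
        (fun t : ℝ => t^(1:ℕ) * F1 (t*x) * ((1-t^2)^((μ-ν)/2-1) * t^ν)) volume 0 1 := by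
      refine domInt hα1 hν (asm_comp_mul hF1c hx 1) (M := |M1|) fun t ht => ?_
      have h1 := hM1 (t*x) ⟨(htxmem t ht).1.le, (htxmem t ht).2⟩
      rw [Real.norm_eq_abs] at h1
      calc |t^(1:ℕ) * F1 (t*x)| = t^(1:ℕ) * |F1 (t*x)| := by
            rw [abs_mul, abs_of_nonneg (pow_nonneg ht.1.le 1)]
        _ ≤ 1 * |F1 (t*x)| := by
            refine mul_le_mul_of_nonneg_right ?_ (abs_nonneg _)
            exact pow_le_one₀ ht.1.le ht.2
        _ ≤ |M1| := by rw [one_mul]; exact h1.trans (le_abs_self M1)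
    -- the singular term: a power bound on F1 near 0
    have hθ : ∃ θ CC : ℝ, 0 ≤ CC ∧ (-1:ℝ) < ν + θ - 1 ∧
        ∀ y ∈ Set.Ioc (0:ℝ) x, |F1 y| ≤ CC * y^θ := by
      rcases le_or_gt ν 0 with hν0 | hν0
      · -- ν ≤ 0 : then F1 0 = 0 and |F1 y| ≤ M y
        have hF10 : F1 0 = 0 := by
          have hc : ContinuousAt (fun y : ℝ => y^(-ν)) 0 :=
            Real.continuousAt_rpow_const 0 (-ν) (Or.inr (by linarith))
          have h1 : Tendsto (fun y : ℝ => y^(-ν)) (nhdsWithin 0 (Set.Ioi 0))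
              (nhds ((0:ℝ)^(-ν))) := hc.tendsto.mono_left nhdsWithin_le_nhds
          have h2 := h1.mul hf'0
          rw [mul_zero] at h2
          have h3 : (fun y : ℝ => y^(-ν) * (y^ν * deriv f y))
              =ᶠ[nhdsWithin 0 (Set.Ioi (0:ℝ))] F1 := by
            filter_upwards [self_mem_nhdsWithin] with y hy
            have hy0 : (0:ℝ) < y := hy
            rw [hdf y hy0, ← mul_assoc, ← Real.rpow_add hy0,
              show -ν + ν = 0 by ring, Real.rpow_zero, one_mul]
          have h4 : Tendsto F1 (nhdsWithin 0 (Set.Ioi (0:ℝ))) (nhds 0) := h2.congr' h3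
          have h5 : Tendsto F1 (nhdsWithin 0 (Set.Ioi (0:ℝ))) (nhds (F1 0)) :=
            (hF1c 0 Set.self_mem_Ici).mono (Set.Ioi_subset_Ici le_rfl)
          exact tendsto_nhds_unique h5 h4
        have hMVT : ∀ y ∈ Set.Ioc (0:ℝ) x, |F1 y| ≤ |M2| * y^(1:ℝ) := by
          intro y hy
          have hds : ∀ z ∈ Set.Icc (0:ℝ) x, HasDerivWithinAt F1 (F2 z) (Set.Icc 0 x) z := by
            intro z hz
            exact (((hF1cd.differentiableOn (by norm_num)) z hz.1).hasDerivWithinAt).mono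
              (Set.Icc_subset_Ici_self)
          have hbd : ∀ z ∈ Set.Icc (0:ℝ) x, ‖F2 z‖ ≤ |M2| := fun z hz =>
            (hM2 z hz).trans (le_abs_self M2)
          have := Convex.norm_image_sub_le_of_norm_hasDerivWithin_le hds hbd
            (convex_Icc 0 x) (Set.left_mem_Icc.2 hx.le) ⟨hy.1.le, hy.2⟩
          rw [hF10, sub_zero, sub_zero, Real.norm_eq_abs, Real.norm_eq_abs] at this
          rw [Real.rpow_one]
          exact this.trans (le_of_eq (by rw [abs_of_pos hy.1]))
        exact ⟨1, |M2|, abs_nonneg _, by linarith, hMVT⟩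
      · refine ⟨0, |M1|, abs_nonneg _, by linarith, fun y hy => ?_⟩
        rw [Real.rpow_zero, mul_one]
        have h1 := hM1 y ⟨hy.1.le, hy.2⟩
        rw [Real.norm_eq_abs] at h1
        exact h1.trans (le_abs_self M1)
    obtain ⟨θ, CC, hCC0, hσν, hbd⟩ := hθ
    have iq : IntervalIntegrable
        (fun t : ℝ => ν/(t*x) * F1 (t*x) * ((1-t^2)^((μ-ν)/2-1) * t^ν)) volume 0 1 := by
      have hasmq : AEStronglyMeasurable (fun t : ℝ => ν/(t*x) * F1 (t*x) * t^(1-θ))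
          (volume.restrict (Ι (0:ℝ) 1)) := by
        rw [Set.uIoc_of_le (by norm_num : (0:ℝ) ≤ 1)]
        refine ((ContinuousOn.mul ?_ (contOn_comp_mul hF1c hx)).mul ?_).aestronglyMeasurable
          measurableSet_Ioc
        · exact continuousOn_const.div ((continuous_mul_right x).continuousOn)
            (fun t ht => (mul_pos ht.1 hx).ne')
        · exact fun t ht =>
            (Real.continuousAt_rpow_const t (1-θ) (Or.inl ht.1.ne')).continuousWithinAt
      have hqb : ∀ t ∈ Set.Ioc (0:ℝ) 1, |ν/(t*x) * F1 (t*x) * t^(1-θ)| ≤ |ν| * CC * x^(θ-1) := by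
        intro t ht
        have htx := htxmem t ht
        have h1 : |F1 (t*x)| ≤ CC * (t*x)^θ := hbd (t*x) ⟨htx.1, htx.2⟩
        have e2 : t^θ * t^(1-θ) = t := by
          rw [← Real.rpow_add ht.1, show θ + (1-θ) = 1 by ring, Real.rpow_one]
        have e3 : x^(θ-1) * x = x^θ := by
          rw [← Real.rpow_add_one hx.ne' (θ-1), show θ-1+1 = θ by ring]
        have habs : |ν/(t*x) * F1 (t*x) * t^(1-θ)| = |ν|/(t*x) * |F1 (t*x)| * t^(1-θ) := by
          rw [abs_mul, abs_mul, abs_div, abs_of_pos htx.1,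
            abs_of_nonneg (Real.rpow_nonneg ht.1.le _)]
        rw [habs]
        have hstep : |ν|/(t*x) * |F1 (t*x)| * t^(1-θ)
            ≤ |ν|/(t*x) * (CC * (t*x)^θ) * t^(1-θ) := by
          refine mul_le_mul_of_nonneg_right (mul_le_mul_of_nonneg_left h1 ?_)
            (Real.rpow_nonneg ht.1.le _)
          exact div_nonneg (abs_nonneg ν) (mul_pos ht.1 hx).le
        refine hstep.trans (le_of_eq ?_)
        rw [Real.mul_rpow ht.1.le hx.le]
        have e5 : |ν|/(t*x) * (CC * (t^θ * x^θ)) * t^(1-θ)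
            = |ν| * CC * (t^θ * t^(1-θ)) * x^θ / (t*x) := by ring
        rw [e5, e2, div_eq_iff (mul_pos ht.1 hx).ne']
        linear_combination (-(|ν| * CC * t)) * e3
      have base := domInt (p := (μ-ν)/2-1) (σ := ν+θ-1) hα1 hσν hasmq hqb
      refine base.congr ?_
      rw [Set.uIoc_of_le (by norm_num : (0:ℝ) ≤ 1)]
      intro t ht
      have e4 : t^(1-θ) * t^(ν+θ-1) = t^ν := by
        rw [← Real.rpow_add ht.1, show 1-θ+(ν+θ-1) = ν by ring]
      calc ν/(t*x) * F1 (t*x) * t^(1-θ) * ((1-t^2)^((μ-ν)/2-1) * t^(ν+θ-1))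
          = ν/(t*x) * F1 (t*x) * ((1-t^2)^((μ-ν)/2-1) * (t^(1-θ) * t^(ν+θ-1))) := by ring
        _ = ν/(t*x) * F1 (t*x) * ((1-t^2)^((μ-ν)/2-1) * t^ν) := by rw [e4]
    -- integration by parts on (0,1)
    have hIBP : (∫ t in (0:ℝ)..1, F2 (t*x) * ((1-t^2)^((μ-ν)/2-1) * t^ν))
          + (∫ t in (0:ℝ)..1, ν/(t*x) * F1 (t*x) * ((1-t^2)^((μ-ν)/2-1) * t^ν))
        = (∫ t in (0:ℝ)..1, t^(2:ℕ) * F2 (t*x) * ((1-t^2)^((μ-ν)/2-1) * t^ν))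
          + (μ/x) * ∫ t in (0:ℝ)..1, t^(1:ℕ) * F1 (t*x) * ((1-t^2)^((μ-ν)/2-1) * t^ν) := by
      have hDer : ∀ t ∈ Set.Ioo (0:ℝ) 1, HasDerivAt
          (fun t => F1 (t*x) * t^ν * (1-t^2)^((μ-ν)/2) / x)
          (F2 (t*x) * ((1-t^2)^((μ-ν)/2-1) * t^ν)
            + ν/(t*x) * F1 (t*x) * ((1-t^2)^((μ-ν)/2-1) * t^ν)
            - (t^(2:ℕ) * F2 (t*x) * ((1-t^2)^((μ-ν)/2-1) * t^ν)
            + μ/x * (t^(1:ℕ) * F1 (t*x) * ((1-t^2)^((μ-ν)/2-1) * t^ν)))) t := by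
        intro t ht
        have ht0 : (0:ℝ) < t := ht.1
        have hbase : (1 - t^2 : ℝ) ≠ 0 := by nlinarith [ht.2]
        have hmul : HasDerivAt (fun t : ℝ => t * x) x t := by
          simpa using (hasDerivAt_id t).mul_const x
        have hA : HasDerivAt (fun t : ℝ => F1 (t*x)) (F2 (t*x) * x) t := by
          exact (hder2 (t*x) (mul_pos ht0 hx)).comp t hmul
        have hB : HasDerivAt (fun t : ℝ => t^ν) (ν * t^(ν-1)) t :=
          Real.hasDerivAt_rpow_const (Or.inl ht0.ne')
        have hsq : HasDerivAt (fun t : ℝ => 1 - t^2) (-(2*t)) t := by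
          simpa using ((hasDerivAt_pow 2 t).const_sub 1)
        have hCc : HasDerivAt (fun t : ℝ => (1-t^2)^((μ-ν)/2))
            (-(2*t) * ((μ-ν)/2) * (1-t^2)^((μ-ν)/2-1)) t :=
          hsq.rpow_const (Or.inl hbase)
        have htot := ((hA.mul hB).mul hCc).div_const x
        convert htot using 1
        · rfl
        · rfl
        · rfl
        have e1 : (1-t^2)^((μ-ν)/2) = (1-t^2)^((μ-ν)/2-1) * (1-t^2) := by
          rw [← Real.rpow_add_one hbase ((μ-ν)/2-1), show (μ-ν)/2-1+1 = (μ-ν)/2 by ring]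
        have e2 : t^ν = t^(ν-1) * t := by
          rw [← Real.rpow_add_one ht0.ne' (ν-1), show ν-1+1 = ν by ring]
        simp only [Pi.mul_apply]
        rw [e1, e2]
        field_simp
        ring
      have hD_int : IntervalIntegrable (fun t : ℝ =>
          F2 (t*x) * ((1-t^2)^((μ-ν)/2-1) * t^ν)
            + ν/(t*x) * F1 (t*x) * ((1-t^2)^((μ-ν)/2-1) * t^ν)
            - (t^(2:ℕ) * F2 (t*x) * ((1-t^2)^((μ-ν)/2-1) * t^ν)
            + μ/x * (t^(1:ℕ) * F1 (t*x) * ((1-t^2)^((μ-ν)/2-1) * t^ν)))) volume 0 1 :=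
        (i2.add iq).sub (i2'.add (i1'.const_mul (μ/x)))
      have htend0 : Tendsto (fun t : ℝ => F1 (t*x) * t^ν * (1-t^2)^((μ-ν)/2) / x)
          (nhdsWithin 0 (Set.Ioi (0:ℝ))) (nhds 0) := by
        have hmap : Tendsto (fun t : ℝ => t*x) (nhdsWithin 0 (Set.Ioi (0:ℝ)))
            (nhdsWithin 0 (Set.Ioi (0:ℝ))) := by
          refine tendsto_nhdsWithin_of_tendsto_nhds_of_eventually_within _ ?_ ?_
          · have h0 := (continuous_mul_right x).tendsto 0
            rw [zero_mul] at h0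
            exact h0.mono_left nhdsWithin_le_nhds
          · filter_upwards [self_mem_nhdsWithin] with t ht
            exact mul_pos ht hx
        have hcomp0 : Tendsto (fun t : ℝ => (t*x)^ν * deriv f (t*x))
            (nhdsWithin 0 (Set.Ioi (0:ℝ))) (nhds 0) := hf'0.comp hmap
        have hone : Tendsto (fun t : ℝ => (1-t^2)^((μ-ν)/2))
            (nhdsWithin 0 (Set.Ioi (0:ℝ))) (nhds 1) := by
          have hc : ContinuousAt (fun t : ℝ => (1-t^2)^((μ-ν)/2)) 0 :=
            ((continuous_const.sub (continuous_pow 2)).continuousAt).rpow_const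
              (Or.inl (by norm_num))
          have h2 := hc.tendsto.mono_left
            (nhdsWithin_le_nhds (s := Set.Ioi (0:ℝ)) (a := (0:ℝ)))
          simpa [Real.one_rpow] using h2
        have hprod : Tendsto (fun t : ℝ => ((t*x)^ν * deriv f (t*x)) * (x^(-ν)/x)
            * (1-t^2)^((μ-ν)/2)) (nhdsWithin 0 (Set.Ioi (0:ℝ))) (nhds 0) := by
          have h3 := (hcomp0.mul_const (x^(-ν)/x)).mul hone
          simpa using h3
        refine Tendsto.congr' ?_ hprod
        filter_upwards [self_mem_nhdsWithin] with t ht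
        have ht0 : (0:ℝ) < t := ht
        rw [hdf (t*x) (mul_pos ht0 hx), Real.mul_rpow ht0.le hx.le]
        have e : x^ν * x^(-ν) = 1 := by
          rw [← Real.rpow_add hx, show ν + -ν = 0 by ring, Real.rpow_zero]
        linear_combination (t^ν * F1 (t*x) * (1-t^2)^((μ-ν)/2) / x) * e
      have htend1 : Tendsto (fun t : ℝ => F1 (t*x) * t^ν * (1-t^2)^((μ-ν)/2) / x)
          (nhdsWithin 1 (Set.Iio (1:ℝ))) (nhds 0) := by
        have h1 : ContinuousAt F1 ((1:ℝ)*x) := by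
          rw [one_mul]
          exact (hF1c x hx.le).continuousAt (Ici_mem_nhds hx)
        have hA : ContinuousAt (fun t : ℝ => F1 (t*x)) 1 := by
          have := ContinuousAt.comp (x := (1:ℝ)) h1 ((continuous_mul_right x).continuousAt); exact this
        have hB : ContinuousAt (fun t : ℝ => t^ν) 1 :=
          Real.continuousAt_rpow_const 1 ν (Or.inl one_ne_zero)
        have houter : ContinuousAt (fun u : ℝ => u^((μ-ν)/2)) ((1:ℝ)-1^2) := by
          have : ((1:ℝ)-1^2) = 0 := by norm_num
          rw [this]
          exact Real.continuousAt_rpow_const 0 _ (Or.inr hα.le)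
        have hCc : ContinuousAt (fun t : ℝ => (1-t^2)^((μ-ν)/2)) 1 := by
          have := ContinuousAt.comp (x := (1:ℝ)) houter
            ((continuous_const.sub (continuous_pow 2)).continuousAt : ContinuousAt (fun t : ℝ => 1 - t^2) 1); exact this
        have hco : ContinuousAt (fun t : ℝ => F1 (t*x) * t^ν * (1-t^2)^((μ-ν)/2) / x) 1 :=
          ((hA.mul hB).mul hCc).div_const x
        have h2 := hco.tendsto.mono_left
          (nhdsWithin_le_nhds (s := Set.Iio (1:ℝ)) (a := (1:ℝ)))
        have hval : F1 ((1:ℝ)*x) * (1:ℝ)^ν * ((1:ℝ)-(1:ℝ)^2)^((μ-ν)/2) / x = 0 := by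
          rw [show ((1:ℝ)-(1:ℝ)^2) = 0 by norm_num, Real.zero_rpow hα.ne']
          ring
        rw [hval] at h2
        exact h2
      have hkey := intervalIntegral.integral_eq_sub_of_hasDerivAt_of_tendsto
        (by norm_num : (0:ℝ) < 1) hDer hD_int htend0 htend1
      have h1 := intervalIntegral.integral_sub (μ := volume) (i2.add iq)
        (i2'.add (i1'.const_mul (μ/x)))
      have h2 := intervalIntegral.integral_add (μ := volume) i2 iq
      have h3 := intervalIntegral.integral_add (μ := volume) i2' (i1'.const_mul (μ/x))
      have h4 := intervalIntegral.integral_const_mul (a := (0:ℝ)) (b := 1) (μ := volume) (μ/x)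
        (fun t : ℝ => t^(1:ℕ) * F1 (t*x) * ((1-t^2)^((μ-ν)/2-1) * t^ν))
      beta_reduce at h1 h2 h3 h4 hkey
      rw [h2, h3, h4] at h1
      rw [h1] at hkey
      linarith [hkey]
    -- assembling
    have hLHS : descentOp1 ν μ (besselOp ν f) x
        = C * ((∫ t in (0:ℝ)..1, F2 (t*x) * ((1-t^2)^((μ-ν)/2-1) * t^ν))
          + ∫ t in (0:ℝ)..1, ν/(t*x) * F1 (t*x) * ((1-t^2)^((μ-ν)/2-1) * t^ν)) := by
      rw [descent_cov ν μ _ hx, ← hCdef]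
      congr 1
      rw [← intervalIntegral.integral_add i2 iq]
      refine intervalIntegral.integral_congr_ae (ae_of_all _ fun t ht => ?_)
      rw [Set.uIoc_of_le (by norm_num : (0:ℝ) ≤ 1)] at ht
      rw [hbessel (t*x) (mul_pos ht.1 hx)]
      ring
    rw [hLHS, besselOp, hT'x, hT''x, hIBP]
    ring
  · -- T 1 = 1
    rw [descent_cov ν μ _ hx]
    have hcongr : (∫ t in (0:ℝ)..1, (fun _ => (1:ℝ)) (t*x) * ((1 - t^2)^((μ-ν)/2-1) * t^ν))
        = ∫ t in (0:ℝ)..1, (1 - t^2)^((μ-ν)/2-1) * t^ν :=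
      intervalIntegral.integral_congr fun t _ => by simp
    rw [hcongr, betaSub hν hα]
    have hsum : (ν+1)/2 + (μ-ν)/2 = (μ+1)/2 := by ring
    rw [hsum]
    field_simp
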